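/- Equivalence of walks on the hexagonal lattice (Theorem 3a): if σ_M(p) = (-1)^{d(p)} σ_R(p) for every site p, where d(p) is the graph distance from p to the origin in the hexagonal lattice, then the flipping mirror walk on σ_M and the flipping rotator walk on σ_R, both starting at the origin with velocity v_k for k even (k ∈ {0,2,4}), have identical position sequences for all t ∈ ℕ. -/

import Mathlib

/-- The six unit velocities v_k = (cos(kπ/3), sin(kπ/3)), written in
coordinates with respect to the basis (1,0) and (1/2, √3/2) of the triangular
lattice containing the hexagonal lattice. -/
def hexVel (k : ZMod 6) : ℤ × ℤ :=
  if k = 0 then (1, 0) else if k = 1 then (0, 1) else if k = 2 then (-1, 1)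
  else if k = 3 then (-1, 0) else if k = 4 then (0, -1) else (1, -1)

/-- The mirror scattering rule M on ℍ² (Table 3). -/
def hexM (k : ZMod 6) (σ : ℤ) : ZMod 6 :=
  if σ = 1 then
    (if k = 0 then 5 else if k = 1 then 2 else if k = 2 then 1
     else if k = 3 then 4 else if k = 4 then 3 else 0)
  else
    (if k = 0 then 1 else if k = 1 then 0 else if k = 2 then 3
     else if k = 3 then 2 else if k = 4 then 5 else 4)

/-- The rotator scattering rule R on ℍ²: k ↦ (k - σ) mod 6. -/
def hexR (k : ZMod 6) (σ : ℤ) : ZMod 6 := k - (σ : ZMod 6)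

/-- State of a walk on ℍ²: position (in coordinates of the ambient triangular
lattice), velocity index, environment of scatterers. -/
structure HexState where
  pos : ℤ × ℤ
  vel : ZMod 6
  env : ℤ × ℤ → ℤ

/-- One step of the flipping dynamics with scattering rule `f`. -/
def hexStep (f : ZMod 6 → ℤ → ZMod 6) (s : HexState) : HexState :=
  let k' := f s.vel (s.env s.pos)
  { pos := s.pos + hexVel k', vel := k',
    env := fun q => if q = s.pos then -s.env s.pos else s.env q }

/-- The walk: state after `t` time steps. -/
def hexWalk (f : ZMod 6 → ℤ → ZMod 6) (s₀ : HexState) (t : ℕ) : HexState :=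
  (hexStep f)^[t] s₀

/-- The class of a triangular-lattice point: (x - y) mod 3.  The hexagonal
sublattice visited by a walker consists of two of the three classes. -/
def triClass (p : ℤ × ℤ) : ZMod 3 := ((p.1 - p.2 : ℤ) : ZMod 3)

lemma hexVel_ne_zero : ∀ k : ZMod 6, hexVel k ≠ 0 := by decide

/-- Adjacency of the hexagonal lattice visited by walks with even-index initial
velocity: sites of class 0 are joined to their three neighbors in the
odd-indexed directions (and symmetrically). -/
def hexAdjE (p q : ℤ × ℤ) : Prop :=
  (triClass p = 0 ∧ ∃ k : ZMod 6, Odd k.val ∧ q = p + hexVel k) ∨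
  (triClass q = 0 ∧ ∃ k : ZMod 6, Odd k.val ∧ p = q + hexVel k)

/-- The hexagonal lattice (for even-index initial velocities) as a graph. -/
def hexGraphE : SimpleGraph (ℤ × ℤ) where
  Adj := hexAdjE
  symm := ⟨fun p q h => Or.symm h⟩
  loopless := ⟨by
    intro p h
    rcases h with ⟨-, k, -, hk⟩ | ⟨-, k, -, hk⟩ <;>
      exact hexVel_ne_zero k (left_eq_add.mp hk)⟩

/-- Graph distance to the origin in the hexagonal lattice (even case). -/
noncomputable def hexDistE (p : ℤ × ℤ) : ℕ := hexGraphE.dist 0 p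

/-! ### Auxiliary lemmas -/

lemma triClass_add (p q : ℤ × ℤ) : triClass (p + q) = triClass p + triClass q := by
  simp only [triClass, Prod.fst_add, Prod.snd_add]
  push_cast
  ring

lemma triClass_hexVel (k : ZMod 6) :
    triClass (hexVel k) = if Even k.val then 1 else 2 := by
  revert k; decide

lemma triClass_step (p : ℤ × ℤ) (k : ZMod 6) :
    triClass (p + hexVel k) = triClass p + (if Even k.val then 1 else 2) := by
  rw [triClass_add, triClass_hexVel]

lemma hexVel_add_three (k : ZMod 6) : hexVel (k + 3) = -hexVel k := by
  revert k; decide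

lemma odd_add_three (k : ZMod 6) (h : Even k.val) : Odd (k + 3).val := by
  revert k; decide

lemma hexM_eq_hexR_even (k : ZMod 6) (hk : Even k.val) (σ : ℤ)
    (hσ : σ = 1 ∨ σ = -1) : hexM k σ = hexR k σ := by
  rcases hσ with rfl | rfl <;> revert k <;> decide

lemma hexM_eq_hexR_odd (k : ZMod 6) (hk : ¬ Even k.val) (σ : ℤ)
    (hσ : σ = 1 ∨ σ = -1) : hexM k (-σ) = hexR k σ := by
  rcases hσ with rfl | rfl <;> revert k <;> decide

lemma hexR_flip (k : ZMod 6) (σ : ℤ) (hσ : σ = 1 ∨ σ = -1) :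
    Even (hexR k σ).val ↔ ¬ Even k.val := by
  rcases hσ with rfl | rfl <;> revert k <;> decide

lemma triClass_zero : triClass (0 : ℤ × ℤ) = 0 := by decide

lemma adjE_class0 (p : ℤ × ℤ) (h : triClass p = 0) (k : ZMod 6) (hk : Odd k.val) :
    hexGraphE.Adj p (p + hexVel k) := Or.inl ⟨h, k, hk, rfl⟩

lemma adjE_class2 (p : ℤ × ℤ) (h : triClass p = 2) (k : ZMod 6) (hk : Even k.val) :
    hexGraphE.Adj p (p + hexVel k) := by
  refine Or.inr ⟨?_, k + 3, odd_add_three k hk, ?_⟩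
  · rw [triClass_step, if_pos hk, h]; decide
  · rw [hexVel_add_three]
    exact (add_neg_cancel_right p (hexVel k)).symm

lemma adjE_classes {p q : ℤ × ℤ} (h : hexGraphE.Adj p q) :
    (triClass p = 0 ∧ triClass q = 2) ∨ (triClass p = 2 ∧ triClass q = 0) := by
  rcases h with ⟨h0, k, hk, rfl⟩ | ⟨h0, k, hk, rfl⟩
  · left
    refine ⟨h0, ?_⟩
    rw [triClass_step, if_neg (by exact Nat.not_even_iff_odd.mpr hk), h0]
    decide
  · right
    refine ⟨?_, h0⟩
    rw [triClass_step, if_neg (by exact Nat.not_even_iff_odd.mpr hk), h0]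
    decide

lemma walk_class_parity {u v : ℤ × ℤ} (w : hexGraphE.Walk u v) :
    (triClass u = 0 →
      (Even w.length ↔ triClass v = 0) ∧ (triClass v = 0 ∨ triClass v = 2)) ∧
    (triClass u = 2 →
      (Even w.length ↔ triClass v = 2) ∧ (triClass v = 0 ∨ triClass v = 2)) := by
  induction w with
  | nil =>
      constructor <;> intro h
      · exact ⟨by simp [h], Or.inl h⟩
      · exact ⟨by simp [h], Or.inr h⟩
  | @cons u x v h w ih =>
      rcases adjE_classes h with ⟨h0, h2⟩ | ⟨h2, h0⟩
      · constructor
        · intro _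
          obtain ⟨hiff, hor⟩ := ih.2 h2
          refine ⟨?_, hor⟩
          rw [SimpleGraph.Walk.length_cons, Nat.even_add_one]
          constructor
          · intro hne
            rcases hor with h' | h'
            · exact h'
            · exact absurd (hiff.mpr h') hne
          · intro hv he
            rw [hiff.mp he] at hv
            exact absurd hv (by decide)
        · intro hu
          rw [h0] at hu
          exact absurd hu (by decide)
      · constructor
        · intro hu
          rw [h2] at hu
          exact absurd hu (by decide)
        · intro _
          obtain ⟨hiff, hor⟩ := ih.1 h0
          refine ⟨?_, hor⟩
          rw [SimpleGraph.Walk.length_cons, Nat.even_add_one]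
          constructor
          · intro hne
            rcases hor with h' | h'
            · exact absurd (hiff.mpr h') hne
            · exact h'
          · intro hv he
            rw [hiff.mp he] at hv
            exact absurd hv (by decide)

lemma neg_one_pow_hexDistE {p : ℤ × ℤ} (hr : hexGraphE.Reachable 0 p) :
    (triClass p = 0 → ((-1 : ℤ)) ^ hexDistE p = 1) ∧
    (triClass p = 2 → ((-1 : ℤ)) ^ hexDistE p = -1) := by
  obtain ⟨w, hw⟩ := hr.exists_walk_length_eq_dist
  obtain ⟨hiff, hor⟩ := (walk_class_parity w).1 triClass_zero
  constructor
  · intro h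
    exact Even.neg_one_pow (by rw [hexDistE, ← hw]; exact hiff.mpr h)
  · intro h
    refine Odd.neg_one_pow (Nat.not_even_iff_odd.mp ?_)
    rw [hexDistE, ← hw]
    intro he
    rw [hiff.mp he] at h
    exact absurd h (by decide)

lemma hexStep_pos (f : ZMod 6 → ℤ → ZMod 6) (s : HexState) :
    (hexStep f s).pos = s.pos + hexVel (f s.vel (s.env s.pos)) := rfl

lemma hexStep_vel (f : ZMod 6 → ℤ → ZMod 6) (s : HexState) :
    (hexStep f s).vel = f s.vel (s.env s.pos) := rfl

lemma hexStep_env (f : ZMod 6 → ℤ → ZMod 6) (s : HexState) (q : ℤ × ℤ) :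
    (hexStep f s).env q = if q = s.pos then -s.env s.pos else s.env q := rfl

lemma hexWalk_succ (f : ZMod 6 → ℤ → ZMod 6) (s : HexState) (t : ℕ) :
    hexWalk f s (t + 1) = hexStep f (hexWalk f s t) :=
  Function.iterate_succ_apply' _ _ _

/-- Theorem 3a: if σ_M(p) = (-1)^{d(p)} σ_R(p) for every site p
of the hexagonal lattice (d = graph distance to the origin), then the flipping
mirror walk on σ_M and the flipping rotator walk on σ_R, both starting at the
origin with a velocity of even index, have identical positions at all times. -/
theorem hex_equivalence_even (σM σR : ℤ × ℤ → ℤ) (hσ : ∀ p, σR p = 1 ∨ σR p = -1)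
    (hrel : ∀ p : ℤ × ℤ, triClass p = 0 ∨ triClass p = 2 →
      σM p = (-1) ^ hexDistE p * σR p)
    (k₀ : ZMod 6) (hk : Even k₀.val) (t : ℕ) :
    (hexWalk hexM ⟨0, k₀, σM⟩ t).pos = (hexWalk hexR ⟨0, k₀, σR⟩ t).pos := by
  have key : ∀ t : ℕ,
      (hexWalk hexM ⟨0, k₀, σM⟩ t).pos = (hexWalk hexR ⟨0, k₀, σR⟩ t).pos ∧
      (hexWalk hexM ⟨0, k₀, σM⟩ t).vel = (hexWalk hexR ⟨0, k₀, σR⟩ t).vel ∧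
      hexGraphE.Reachable 0 (hexWalk hexR ⟨0, k₀, σR⟩ t).pos ∧
      (triClass (hexWalk hexR ⟨0, k₀, σR⟩ t).pos = 0 ∨
        triClass (hexWalk hexR ⟨0, k₀, σR⟩ t).pos = 2) ∧
      (Even (hexWalk hexR ⟨0, k₀, σR⟩ t).vel.val ↔
        triClass (hexWalk hexR ⟨0, k₀, σR⟩ t).pos = 0) ∧
      (∀ q, (hexWalk hexR ⟨0, k₀, σR⟩ t).env q = 1 ∨
        (hexWalk hexR ⟨0, k₀, σR⟩ t).env q = -1) ∧
      (∀ q, triClass q = 0 ∨ triClass q = 2 → hexGraphE.Reachable 0 q →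
        (hexWalk hexM ⟨0, k₀, σM⟩ t).env q =
          (-1) ^ hexDistE q * (hexWalk hexR ⟨0, k₀, σR⟩ t).env q) := by
    intro t
    induction t with
    | zero =>
        exact ⟨rfl, rfl, SimpleGraph.Reachable.refl 0, Or.inl triClass_zero,
          iff_of_true hk triClass_zero, hσ, fun q hq _ => hrel q hq⟩
    | succ t ih =>
        set sM := hexWalk hexM ⟨0, k₀, σM⟩ t with hsM
        set sR := hexWalk hexR ⟨0, k₀, σR⟩ t with hsR
        obtain ⟨hpos, hvel, hreach, hcls, hpar, henvR, henv⟩ := ih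
        rw [hexWalk_succ, hexWalk_succ, ← hsM, ← hsR]
        have hσp := henvR sR.pos
        have hEnvMp : sM.env sM.pos =
            (-1 : ℤ) ^ hexDistE sR.pos * sR.env sR.pos := by
          rw [hpos]; exact henv sR.pos hcls hreach
        have hneg := neg_one_pow_hexDistE hreach
        -- velocities after the step agree
        have hveleq : hexM sM.vel (sM.env sM.pos) = hexR sR.vel (sR.env sR.pos) := by
          by_cases hek : Even sR.vel.val
          · have hc0 : triClass sR.pos = 0 := hpar.mp hek
            rw [hvel, hEnvMp, hneg.1 hc0, one_mul]
            exact hexM_eq_hexR_even _ hek _ hσp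
          · have hc2 : triClass sR.pos = 2 := by
              rcases hcls with h | h
              · exact absurd (hpar.mpr h) hek
              · exact h
            rw [hvel, hEnvMp, hneg.2 hc2, neg_one_mul]
            exact hexM_eq_hexR_odd _ hek _ hσp
        have hposeq : (hexStep hexM sM).pos = (hexStep hexR sR).pos := by
          rw [hexStep_pos, hexStep_pos, hveleq, hpos]
        have hveleq' : (hexStep hexM sM).vel = (hexStep hexR sR).vel := by
          rw [hexStep_vel, hexStep_vel, hveleq]
        have hk' : Even (hexStep hexR sR).vel.val ↔ ¬ Even sR.vel.val := by
          rw [hexStep_vel]; exact hexR_flip _ _ hσp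
        have hcl' : triClass (hexStep hexR sR).pos =
            triClass sR.pos + (if Even (hexStep hexR sR).vel.val then 1 else 2) := by
          rw [hexStep_pos, triClass_step, hexStep_vel]
        -- new environments remain ±1
        have henvR' : ∀ q, (hexStep hexR sR).env q = 1 ∨
            (hexStep hexR sR).env q = -1 := by
          intro q
          rw [hexStep_env]
          split
          · rcases hσp with h | h <;> rw [h]
            · right; norm_num
            · left; norm_num
          · exact henvR q
        -- new environments remain related
        have henv' : ∀ q, triClass q = 0 ∨ triClass q = 2 →
            hexGraphE.Reachable 0 q →
            (hexStep hexM sM).env q =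
              (-1) ^ hexDistE q * (hexStep hexR sR).env q := by
          intro q hq hrq
          by_cases hqp : q = sR.pos
          · rw [hexStep_env, hexStep_env, hpos, if_pos hqp, if_pos hqp,
              henv sR.pos hcls hreach, hqp]
            ring
          · rw [hexStep_env, hexStep_env, hpos, if_neg hqp, if_neg hqp]
            exact henv q hq hrq
        -- reachability, class and parity of the new state
        have hstep : hexGraphE.Reachable 0 (hexStep hexR sR).pos ∧
            (triClass (hexStep hexR sR).pos = 0 ∨
              triClass (hexStep hexR sR).pos = 2) ∧
            (Even (hexStep hexR sR).vel.val ↔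
              triClass (hexStep hexR sR).pos = 0) := by
          by_cases hek : Even sR.vel.val
          · have hc0 : triClass sR.pos = 0 := hpar.mp hek
            have hko : ¬ Even (hexStep hexR sR).vel.val := fun h => (hk'.mp h) hek
            have hcp' : triClass (hexStep hexR sR).pos = 2 := by
              rw [hcl', if_neg hko, hc0]; decide
            have hadj : hexGraphE.Adj sR.pos (hexStep hexR sR).pos := by
              rw [hexStep_pos]
              exact adjE_class0 _ hc0 _
                (Nat.not_even_iff_odd.mp (by rw [← hexStep_vel hexR sR]; exact hko))
            refine ⟨hreach.trans hadj.reachable, Or.inr hcp', ?_⟩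
            rw [hcp']
            exact iff_of_false hko (by decide)
          · have hc2 : triClass sR.pos = 2 := by
              rcases hcls with h | h
              · exact absurd (hpar.mpr h) hek
              · exact h
            have hke : Even (hexStep hexR sR).vel.val := hk'.mpr hek
            have hcp' : triClass (hexStep hexR sR).pos = 0 := by
              rw [hcl', if_pos hke, hc2]; decide
            have hadj : hexGraphE.Adj sR.pos (hexStep hexR sR).pos := by
              rw [hexStep_pos]
              exact adjE_class2 _ hc2 _ (by rw [← hexStep_vel hexR sR]; exact hke)
            exact ⟨hreach.trans hadj.reachable, Or.inl hcp',
              iff_of_true hke hcp'⟩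
        exact ⟨hposeq, hveleq', hstep.1, hstep.2.1, hstep.2.2, henvR', henv'⟩
  exact (key t).1
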